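/- A nontrivial compact (Hausdorff) topological group does not admit a contractive automorphism, i.e., there is no topological group automorphism φ of G with φⁿ(x) → 1 for all x ∈ G. -/

import Mathlib

open MeasureTheory Filter Topology Set
open scoped ENNReal

/-- A nontrivial compact Hausdorff topological group admits no contractive
automorphism: there is no homeomorphic group automorphism φ with φⁿ(x) → 1
for all x. -/
theorem no_contractive_automorphism_of_compact
    {G : Type*} [TopologicalSpace G] [Group G] [IsTopologicalGroup G]
    [CompactSpace G] [T2Space G] [Nontrivial G] :
    ¬ ∃ φ : G ≃* G, Continuous φ ∧ Continuous φ.symm ∧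
        ∀ x : G, Filter.Tendsto (fun n => (⇑φ)^[n] x) Filter.atTop (nhds (1 : G)) := by
  rintro ⟨φ, hφc, hφsc, hconv⟩
  borelize G
  set μ : Measure G := Measure.haarMeasure (⊤ : TopologicalSpace.PositiveCompacts G) with hμ
  have hprob : IsProbabilityMeasure μ := ⟨by
    simpa using Measure.haarMeasure_self (K₀ := (⊤ : TopologicalSpace.PositiveCompacts G))⟩
  -- φ preserves μ
  have hmapprob : IsProbabilityMeasure (μ.map φ) :=
    Measure.isProbabilityMeasure_map (hφc.measurable.aemeasurable)
  have hmaphaar : Measure.IsHaarMeasure (μ.map φ) := φ.isHaarMeasure_map μ hφc hφsc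
  have hmap : μ.map φ = μ := Measure.isHaarMeasure_eq_of_isProbabilityMeasure _ _
  -- iterates preserve μ
  have hiter : ∀ n : ℕ, μ.map (⇑φ)^[n] = μ := by
    intro n
    induction n with
    | zero => simp
    | succ n ih =>
      rw [Function.iterate_succ', ← Measure.map_map hφc.measurable]
      · rw [ih, hmap]
      · exact (hφc.iterate n).measurable
  have hpre : ∀ (n : ℕ) (U : Set G), MeasurableSet U → μ ((⇑φ)^[n] ⁻¹' U) = μ U := by
    intro n U hU
    conv_rhs => rw [← hiter n]
    rw [Measure.map_apply (hφc.iterate n).measurable hU]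
  -- μ {1} < μ univ
  obtain ⟨x, hx⟩ := exists_ne (1 : G)
  have hsing : μ {x} = μ {(1 : G)} := by
    have : (fun y => x⁻¹ * y) ⁻¹' {(1 : G)} = {x} := by
      ext y
      simp only [Set.mem_preimage, Set.mem_singleton_iff, inv_mul_eq_one]
      exact eq_comm
    rw [← this, measure_preimage_mul]
  have h1lt : μ {(1 : G)} < μ univ := by
    rcases lt_or_ge (μ {(1 : G)}) (μ univ) with h | h
    · exact h
    · exfalso
      have h1 : μ {(1 : G)} = μ univ := le_antisymm (measure_mono (subset_univ _)) h
      have hdisj : Disjoint ({x} : Set G) {(1 : G)} := by simp [hx]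
      have hle : μ ({x} ∪ {(1 : G)}) ≤ μ univ := measure_mono (subset_univ _)
      have h2 : μ ({x} : Set G) + μ {(1 : G)} = μ ({x} ∪ {(1 : G)}) :=
        (measure_union hdisj (measurableSet_singleton _)).symm
      rw [hsing, h1] at h2
      have huniv : μ univ = 1 := measure_univ
      have : (2 : ℝ≥0∞) ≤ 1 := by
        calc (2 : ℝ≥0∞) = 1 + 1 := by norm_num
        _ = μ univ + μ univ := by rw [huniv]
        _ = μ ({x} ∪ {(1 : G)}) := h2
        _ ≤ μ univ := hle
        _ = 1 := huniv
      norm_num at this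
  -- choose open U ∋ 1 with μ U < μ univ
  obtain ⟨U, hUsub, hUopen, hUlt⟩ :=
    Set.exists_isOpen_lt_of_lt ({(1 : G)}) (μ univ) h1lt
  have h1U : (1 : G) ∈ U := hUsub rfl
  -- the exhausting sets
  set B : ℕ → Set G := fun n => ⋂ m, ⋂ (_ : n ≤ m), (⇑φ)^[m] ⁻¹' U with hB
  have hBmeas : ∀ n, MeasurableSet (B n) := by
    intro n
    exact MeasurableSet.iInter fun m => MeasurableSet.iInter fun _ =>
      (hUopen.preimage (hφc.iterate m)).measurableSet
  have hBmono : Monotone B := by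
    intro a b hab
    exact Set.iInter₂_mono' fun m hm => ⟨m, hab.trans hm, le_rfl⟩
  have hBunion : ⋃ n, B n = univ := by
    ext y
    simp only [mem_iUnion, mem_univ, iff_true]
    have := (hconv y).eventually (hUopen.mem_nhds h1U)
    rw [eventually_atTop] at this
    obtain ⟨n, hn⟩ := this
    exact ⟨n, Set.mem_iInter₂.mpr fun m hm => hn m hm⟩
  have htend : Tendsto (fun n => μ (B n)) atTop (𝓝 (μ univ)) := by
    have := tendsto_measure_iUnion_atTop (μ := μ) hBmono
    rwa [hBunion] at this
  obtain ⟨n, hn⟩ := (htend.eventually (eventually_gt_nhds hUlt)).exists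
  have hsub : B n ⊆ (⇑φ)^[n] ⁻¹' U := Set.iInter₂_subset n le_rfl
  have : μ (B n) ≤ μ U := by
    calc μ (B n) ≤ μ ((⇑φ)^[n] ⁻¹' U) := measure_mono hsub
    _ = μ U := hpre n U hUopen.measurableSet
  exact absurd this (not_le.mpr hn)
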